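/- With A* = {u ∈ [q]^a : Σ_i u_i ≡ 0 mod q} and 2a ≤ ℓ, the encoding map encode₂ of Algorithm 2 is injective on {1,...,q−1}^{(ℓ−a)M} with M = q^{a−1}, and every output is (A*,ℓ)-addressable. Consequently, for n = q^{a−1}ℓ with 4 ≤ 2a ≤ ℓ, the number of distinct ℓ-gram profile vectors satisfies P_q(n,ℓ) ≥ (q−1)^{q^{a−1}(ℓ−a)}. -/
import Mathlib


attribute [local instance] Classical.propDecidable

/-- The ℓ-gram profile vector of `x`. -/
noncomputable def profileVec (q n ℓ : ℕ) (x : Fin n → Fin q) : (Fin ℓ → Fin q) → ℕ :=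
  fun z => ((Finset.range (n + 1 - ℓ)).filter
    (fun i => ∀ k : Fin ℓ, ∀ h : i + k.val < n, x ⟨i + k.val, h⟩ = z k)).card

/-- `P_q(n,ℓ)`: the number of distinct ℓ-gram profile vectors of words in `[q]^n`. -/
noncomputable def numProfiles (q n ℓ : ℕ) : ℕ :=
  (Finset.univ.image (profileVec q n ℓ)).card

/-- The block construction of Algorithm 2: starting from the address `u`
(a list of length `a`), after `m` steps append the `c m`-th element (1-indexed)
of `[q] \ {z_bad}`, where `z_bad` is the negative (mod `q`) of the sum of the
last `a − 1` symbols. -/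
def blockList (q a : ℕ) (hq : 0 < q) (u : List (Fin q)) (c : ℕ → ℕ) : ℕ → List (Fin q)
  | 0 => u
  | m + 1 =>
    let z := blockList q a hq u c m
    let zbad : ℕ := (q - (((z.reverse.take (a - 1)).map Fin.val).sum % q)) % q
    let t := c m
    z ++ [⟨(if t ≤ zbad then t - 1 else t) % q, Nat.mod_lt _ hq⟩]

/-- Algorithm 2, `encode₂`: concatenate the `M` blocks, block `i` built from
address `u i` and data `c i`. -/
def encode2 (q a ℓ M : ℕ) (hq : 0 < q) (u : Fin M → List (Fin q))
    (c : Fin M → ℕ → ℕ) : List (Fin q) :=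
  (List.ofFn (fun i : Fin M => blockList q a hq (u i) (c i) (ℓ - a))).flatten

/-- `(A,ℓ)`-addressability for list words. -/
def AddressableL (q a ℓ M : ℕ) (u : Fin M → List (Fin q)) (x : List (Fin q)) : Prop :=
  x.length = M * ℓ ∧
  (∀ i : Fin M, (x.drop (i.val * ℓ)).take a = u i) ∧
  (∀ i : Fin M, ∀ j : ℕ, 1 ≤ j → j + a ≤ ℓ → ∀ m : Fin M,
    (x.drop (i.val * ℓ + j)).take a ≠ u m)

/-! ### Auxiliary lemmas -/

lemma blockList_succ (q a : ℕ) (hq : 0 < q) (u : List (Fin q)) (c : ℕ → ℕ) (m : ℕ) :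
    blockList q a hq u c (m + 1) =
      blockList q a hq u c m ++
        [⟨(if c m ≤ (q - ((((blockList q a hq u c m).reverse.take (a - 1)).map Fin.val).sum % q)) % q
            then c m - 1 else c m) % q, Nat.mod_lt _ hq⟩] := rfl

lemma blockList_length (q a : ℕ) (hq : 0 < q) (u : List (Fin q)) (c : ℕ → ℕ) (m : ℕ) :
    (blockList q a hq u c m).length = u.length + m := by
  induction m with
  | zero => rfl
  | succ n ih => rw [blockList_succ]; simp [ih]; omega

lemma blockList_prefix_le (q a : ℕ) (hq : 0 < q) (u : List (Fin q)) (c : ℕ → ℕ)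
    {m m' : ℕ} (h : m ≤ m') :
    blockList q a hq u c m <+: blockList q a hq u c m' := by
  induction m' with
  | zero => have : m = 0 := by omega
            subst this; exact List.prefix_rfl
  | succ n ih =>
    rcases Nat.eq_or_lt_of_le h with h' | h'
    · subst h'; exact List.prefix_rfl
    · rw [blockList_succ]; exact (ih (by omega)).trans (List.prefix_append _ _)

lemma key_arith (q : ℕ) (hq : 2 ≤ q) (S t : ℕ) (ht1 : 1 ≤ t) (ht2 : t ≤ q - 1) :
    (S + (if t ≤ (q - S % q) % q then t - 1 else t) % q) % q ≠ 0 := by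
  have hq0 : 0 < q := by omega
  set s := S % q with hs
  have hsq : s < q := Nat.mod_lt _ hq0
  set zb := (q - s) % q with hzb
  have hzbq : zb < q := Nat.mod_lt _ hq0
  have hzbv : zb = if s = 0 then 0 else q - s := by
    rcases Nat.eq_zero_or_pos s with h | h
    · simp [hzb, h]
    · rw [hzb, if_neg (by omega), Nat.mod_eq_of_lt (by omega)]
  set v := (if t ≤ zb then t - 1 else t) % q with hv
  have hvv : v = if t ≤ zb then t - 1 else t := by
    rw [hv]; exact Nat.mod_eq_of_lt (by split <;> omega)
  have hvq : v < q := by rw [hvv]; split <;> omega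
  intro h0
  have h1 : (s + v) % q = 0 := by
    rw [Nat.add_mod] at h0
    rwa [← hs, Nat.mod_eq_of_lt hvq] at h0
  obtain ⟨k, hk⟩ := Nat.dvd_of_mod_eq_zero h1
  have hk2 : k ≤ 1 := by nlinarith
  have hzb2 : (s = 0 ∧ zb = 0) ∨ (0 < s ∧ zb + s = q) := by
    rcases Nat.eq_zero_or_pos s with h | h
    · exact Or.inl ⟨h, by rw [hzbv, if_pos h]⟩
    · refine Or.inr ⟨h, ?_⟩
      rw [hzbv, if_neg (by omega)]; omega
  have hv2 : (t ≤ zb ∧ v = t - 1) ∨ (zb < t ∧ v = t) := by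
    rcases le_or_gt t zb with h | h
    · exact Or.inl ⟨h, by rw [hvv, if_pos h]⟩
    · exact Or.inr ⟨h, by rw [hvv, if_neg (by omega)]⟩
  interval_cases k <;> rcases hzb2 with ⟨h1, h2⟩ | ⟨h1, h2⟩ <;>
    rcases hv2 with ⟨h3, h4⟩ | ⟨h3, h4⟩ <;> omega

lemma blockList_step_sum (q a : ℕ) (hq : 0 < q) (hq2 : 2 ≤ q) (ha : 1 ≤ a)
    (u : List (Fin q)) (hu : u.length = a) (c : ℕ → ℕ) (m : ℕ)
    (hc1 : 1 ≤ c m) (hc2 : c m ≤ q - 1) :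
    ((((blockList q a hq u c (m + 1)).drop (m + 1)).map Fin.val).sum) % q ≠ 0 := by
  set z := blockList q a hq u c m with hzdef
  have hzlen : z.length = a + m := by
    have h := blockList_length q a hq u c m
    rw [hu] at h; rw [← hzdef] at h; exact h
  have hrev : z.reverse.take (a - 1) = (z.drop (m + 1)).reverse := by
    rw [List.take_reverse, show z.length - (a - 1) = m + 1 by omega]
  have hS : ((z.reverse.take (a - 1)).map Fin.val).sum = ((z.drop (m + 1)).map Fin.val).sum := by
    rw [hrev, List.map_reverse, List.sum_reverse]
  rw [blockList_succ, List.drop_append_of_le_length (by rw [blockList_length, hu]; omega),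
    List.map_append,
    List.sum_append, ← hzdef, hS]
  simp only [List.map_cons, List.map_nil, List.sum_cons, List.sum_nil, add_zero]
  exact key_arith q hq2 _ (c m) hc1 hc2

lemma blockList_interior (q a : ℕ) (hq : 0 < q) (hq2 : 2 ≤ q) (ha : 1 ≤ a)
    (u : List (Fin q)) (hu : u.length = a) (c : ℕ → ℕ) (N j : ℕ)
    (hj1 : 1 ≤ j) (hjN : j ≤ N) (hc1 : 1 ≤ c (j - 1)) (hc2 : c (j - 1) ≤ q - 1) :
    ((((blockList q a hq u c N).drop j).take a).map Fin.val).sum % q ≠ 0 := by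
  obtain ⟨m, rfl⟩ : ∃ m, j = m + 1 := ⟨j - 1, by omega⟩
  obtain ⟨r, hr⟩ := blockList_prefix_le q a hq u c (show m + 1 ≤ N by omega)
  have hlen : (blockList q a hq u c (m + 1)).length = a + (m + 1) := by
    rw [blockList_length, hu]
  rw [← hr, List.drop_append_of_le_length (by omega),
    List.take_append_of_le_length (by rw [List.length_drop]; omega),
    List.take_of_length_le (by rw [List.length_drop]; omega)]
  simpa using blockList_step_sum q a hq hq2 ha u hu c m hc1 hc2

lemma step_inj (q zb t t' : ℕ) (hq : 2 ≤ q) (hzb : zb < q)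
    (ht1 : 1 ≤ t) (ht2 : t ≤ q - 1) (ht1' : 1 ≤ t') (ht2' : t' ≤ q - 1)
    (h : (if t ≤ zb then t - 1 else t) % q = (if t' ≤ zb then t' - 1 else t') % q) : t = t' := by
  rw [Nat.mod_eq_of_lt (by split <;> omega), Nat.mod_eq_of_lt (by split <;> omega)] at h
  split_ifs at h <;> omega

lemma blockList_data_inj (q a : ℕ) (hq : 0 < q) (hq2 : 2 ≤ q) (u : List (Fin q)) (c c' : ℕ → ℕ) :
    ∀ N, (∀ m, m < N → 1 ≤ c m ∧ c m ≤ q - 1) → (∀ m, m < N → 1 ≤ c' m ∧ c' m ≤ q - 1) →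
      blockList q a hq u c N = blockList q a hq u c' N → ∀ m, m < N → c m = c' m := by
  intro N
  induction N with
  | zero => intro _ _ _ m hm; omega
  | succ n ih =>
    intro h1 h2 heq m hm
    rw [blockList_succ, blockList_succ] at heq
    obtain ⟨hz, hv⟩ := List.append_inj heq (by rw [blockList_length, blockList_length])
    rcases Nat.lt_or_ge m n with hmn | hmn
    · exact ih (fun k hk => h1 k (by omega)) (fun k hk => h2 k (by omega)) hz m hmn
    · have hmn' : m = n := by omega
      subst hmn'
      have hvv := List.head_eq_of_cons_eq hv
      have hval := congrArg Fin.val hvv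
      simp only at hval
      rw [hz] at hval
      exact step_inj q _ (c m) (c' m) hq2 (Nat.mod_lt _ hq)
        (h1 m (by omega)).1 (h1 m (by omega)).2 (h2 m (by omega)).1 (h2 m (by omega)).2 hval

def wordOf {q n : ℕ} (xs : List (Fin q)) (h : xs.length = n) : Fin n → Fin q :=
  fun k => xs[k.val]'(by rw [h]; exact k.isLt)

lemma flatten_drop_mul {α : Type*} (ℓ : ℕ) :
    ∀ (i : ℕ) (L : List (List α)), (∀ l ∈ L, l.length = ℓ) →
      L.flatten.drop (i * ℓ) = (L.drop i).flatten := by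
  intro i
  induction i with
  | zero => simp
  | succ n ih =>
    intro L hL
    cases L with
    | nil => simp
    | cons hd tl =>
      have hhd : hd.length = ℓ := hL hd (by simp)
      rw [List.flatten_cons, show (n + 1) * ℓ = ℓ + n * ℓ by ring, ← List.drop_drop,
        List.drop_left' hhd, ih tl (fun l hl => hL l (by simp [hl]))]
      simp

lemma flatten_ofFn_length {α : Type*} (M ℓ : ℕ) (B : Fin M → List α)
    (hB : ∀ i, (B i).length = ℓ) : (List.ofFn B).flatten.length = M * ℓ := by
  rw [List.length_flatten, List.map_ofFn, List.sum_ofFn]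
  simp [hB, Finset.sum_const, mul_comm]

lemma flatten_ofFn_drop {α : Type*} (M ℓ : ℕ) (B : Fin M → List α)
    (hB : ∀ i, (B i).length = ℓ) (i : Fin M) :
    (List.ofFn B).flatten.drop (i.val * ℓ) =
      B i ++ ((List.ofFn B).drop (i.val + 1)).flatten := by
  rw [flatten_drop_mul ℓ i.val (List.ofFn B) (by simp; intro j; exact hB j)]
  rw [List.drop_eq_getElem_cons (by simp [i.isLt]), List.getElem_ofFn]
  simp [List.flatten_cons]

lemma mem_profile (q n ℓ : ℕ) (xs w : List (Fin q)) (hx : xs.length = n) (hw : w.length = ℓ) :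
    0 < profileVec q n ℓ (wordOf xs hx) (wordOf w hw) ↔
      ∃ p, p + ℓ ≤ n ∧ (xs.drop p).take ℓ = w := by
  rw [profileVec, Finset.card_pos]
  constructor
  · rintro ⟨p, hp⟩
    rw [Finset.mem_filter, Finset.mem_range] at hp
    obtain ⟨hp1, hp2⟩ := hp
    refine ⟨p, by omega, ?_⟩
    apply List.ext_getElem (by rw [List.length_take, List.length_drop, hx, hw]; omega)
    intro k h1 h2
    rw [List.getElem_take, List.getElem_drop]
    have := hp2 ⟨k, by rw [hw] at h2; exact h2⟩
      (by simp only [Fin.val_mk]; rw [List.length_take, List.length_drop, hx] at h1; omega)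
    simpa [wordOf] using this
  · rintro ⟨p, hpn, hgram⟩
    refine ⟨p, ?_⟩
    rw [Finset.mem_filter, Finset.mem_range]
    refine ⟨by omega, ?_⟩
    intro k h
    have hk : (k : ℕ) < (List.take ℓ (List.drop p xs)).length := by
      rw [List.length_take, List.length_drop, hx]; exact lt_min k.isLt (by omega)
    have := List.getElem_of_eq hgram hk
    rw [List.getElem_take, List.getElem_drop] at this
    simpa [wordOf] using this

lemma recover (q a ℓ M : ℕ) (ha : 2 ≤ a) (hℓ : 2 * a ≤ ℓ)
    (u : Fin M → List (Fin q)) (huinj : Function.Injective u)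
    (xs : List (Fin q)) (hadd : AddressableL q a ℓ M u xs)
    (i : Fin M) (w : List (Fin q))
    (hwpre : w.take a = u i)
    (hwint : ∀ j, 1 ≤ j → j + a ≤ ℓ → ∀ m : Fin M, (w.drop j).take a ≠ u m)
    (p : ℕ) (hp : p + ℓ ≤ M * ℓ) (hgram : (xs.drop p).take ℓ = w) :
    p = i.val * ℓ := by
  obtain ⟨hlen, hpre, hint⟩ := hadd
  have hℓ0 : 0 < ℓ := by omega
  obtain ⟨i', j, hi', hj, hpjd⟩ : ∃ i' j, i' < M ∧ j < ℓ ∧ p = i' * ℓ + j := by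
    refine ⟨p / ℓ, p % ℓ, ?_, Nat.mod_lt _ hℓ0, ?_⟩
    · rw [Nat.div_lt_iff_lt_mul hℓ0]; omega
    · rw [mul_comm]; exact (Nat.div_add_mod p ℓ).symm
  have htakea : w.take a = (xs.drop p).take a := by
    rw [← hgram, List.take_take, min_eq_left (by omega)]
  rcases Nat.eq_zero_or_pos j with hj0 | hj0
  · have h1 : (xs.drop (i' * ℓ)).take a = u ⟨i', hi'⟩ := hpre ⟨i', hi'⟩
    have h2 : u ⟨i', hi'⟩ = u i := by
      rw [← h1, ← hwpre, htakea, hpjd, hj0, add_zero]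
    have h3 : i' = i.val := congrArg Fin.val (huinj h2)
    rw [hpjd, hj0, add_zero, h3]
  · exfalso
    rcases le_or_gt (j + a) ℓ with hja | hja
    · exact hint ⟨i', hi'⟩ j hj0 hja i (by rw [← hpjd, ← htakea, hwpre])
    · obtain ⟨k, hk⟩ : ∃ k, j + k = ℓ := ⟨ℓ - j, by omega⟩
      have hij : (i' + 1) * ℓ = i' * ℓ + ℓ := by ring
      have hi1 : i' + 1 < M := by
        have h2 : (i' + 1) * ℓ < M * ℓ := by omega
        exact lt_of_mul_lt_mul_right h2 (by omega)
      have hwk : (w.drop k).take a = (xs.drop ((i' + 1) * ℓ)).take a := by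
        rw [← hgram, List.drop_take, List.take_take, min_eq_left (by omega),
          List.drop_drop, show p + k = (i' + 1) * ℓ by omega]
      exact hwint k (by omega) (by omega) ⟨i' + 1, hi1⟩
        (by rw [hwk]; exact hpre ⟨i' + 1, hi1⟩)

lemma encode2_length (q a ℓ M : ℕ) (hq : 0 < q) (haℓ : a ≤ ℓ)
    (u : Fin M → List (Fin q)) (hulen : ∀ i, (u i).length = a) (c : Fin M → ℕ → ℕ) :
    (encode2 q a ℓ M hq u c).length = M * ℓ := by
  rw [encode2]
  exact flatten_ofFn_length M ℓ _ (fun j => by rw [blockList_length, hulen]; omega)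

lemma encode2_inj (q a ℓ M : ℕ) (hq : 0 < q) (hq2 : 2 ≤ q) (haℓ : a ≤ ℓ)
    (u : Fin M → List (Fin q)) (hulen : ∀ i, (u i).length = a)
    (c c' : Fin M → ℕ → ℕ)
    (hc : ∀ i m, m < ℓ - a → 1 ≤ c i m ∧ c i m ≤ q - 1)
    (hc' : ∀ i m, m < ℓ - a → 1 ≤ c' i m ∧ c' i m ≤ q - 1)
    (heq : encode2 q a ℓ M hq u c = encode2 q a ℓ M hq u c') :
    ∀ i m, m < ℓ - a → c i m = c' i m := by
  intro i m hm
  have hb : ∀ d : Fin M → ℕ → ℕ,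
      ((encode2 q a ℓ M hq u d).drop (i.val * ℓ)).take ℓ =
        blockList q a hq (u i) (d i) (ℓ - a) := by
    intro d
    rw [encode2, flatten_ofFn_drop M ℓ _ (fun j => by rw [blockList_length, hulen]; omega) i]
    exact List.take_left' (by rw [blockList_length, hulen]; omega)
  have hbe : blockList q a hq (u i) (c i) (ℓ - a) = blockList q a hq (u i) (c' i) (ℓ - a) := by
    rw [← hb c, ← hb c', heq]
  exact blockList_data_inj q a hq hq2 (u i) (c i) (c' i) (ℓ - a) (hc i) (hc' i) hbe m hm

lemma encode2_addressable (q a ℓ M : ℕ) (hq : 0 < q) (hq2 : 2 ≤ q) (ha1 : 1 ≤ a)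
    (haℓ : 2 * a ≤ ℓ)
    (u : Fin M → List (Fin q)) (hulen : ∀ i, (u i).length = a)
    (husum : ∀ i, (((u i).map Fin.val).sum) % q = 0)
    (c : Fin M → ℕ → ℕ) (hc : ∀ i m, m < ℓ - a → 1 ≤ c i m ∧ c i m ≤ q - 1) :
    AddressableL q a ℓ M u (encode2 q a ℓ M hq u c) := by
  have hBlen : ∀ j : Fin M, (blockList q a hq (u j) (c j) (ℓ - a)).length = ℓ := fun j => by
    rw [blockList_length, hulen]; omega
  refine ⟨encode2_length q a ℓ M hq (by omega) u hulen c, ?_, ?_⟩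
  · intro i
    rw [encode2, flatten_ofFn_drop M ℓ _ hBlen i,
      List.take_append_of_le_length (by rw [hBlen]; omega)]
    have hpre := blockList_prefix_le q a hq (u i) (c i) (Nat.zero_le (ℓ - a))
    have h := List.prefix_iff_eq_take.mp hpre
    have h0 : blockList q a hq (u i) (c i) 0 = u i := rfl
    rw [h0] at h
    rw [hulen i] at h
    exact h.symm
  · intro i j hj1 hja m
    rw [encode2, ← List.drop_drop, flatten_ofFn_drop M ℓ _ hBlen i,
      List.drop_append_of_le_length (by rw [hBlen]; omega),
      List.take_append_of_le_length (by rw [List.length_drop, hBlen]; omega)]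
    intro hEq
    have h0 := husum m
    rw [← hEq] at h0
    exact blockList_interior q a hq hq2 ha1 (u i) (hulen i) (c i) (ℓ - a) j hj1 (by omega)
      (hc i (j - 1) (by omega)).1 (hc i (j - 1) (by omega)).2 h0

def dataFun (q a ℓ M : ℕ) (d : Fin M → Fin (ℓ - a) → Fin (q - 1)) : Fin M → ℕ → ℕ :=
  fun i m => if h : m < ℓ - a then (d i ⟨m, h⟩).val + 1 else 1

lemma encode2_count (q a ℓ : ℕ) (hq : 2 ≤ q) (ha : 2 ≤ a) (hℓ : 2 * a ≤ ℓ)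
    (M : ℕ) (hM : 0 < M)
    (u : Fin M → List (Fin q)) (hulen : ∀ i, (u i).length = a)
    (husum : ∀ i, (((u i).map Fin.val).sum) % q = 0)
    (huinj : Function.Injective u) :
    (q - 1) ^ (M * (ℓ - a)) ≤ numProfiles q (M * ℓ) ℓ := by
  have hq0 : 0 < q := by omega
  have hcf : ∀ d : Fin M → Fin (ℓ - a) → Fin (q - 1), ∀ i m, m < ℓ - a →
      1 ≤ dataFun q a ℓ M d i m ∧ dataFun q a ℓ M d i m ≤ q - 1 := by
    intro d i m hm
    simp only [dataFun, dif_pos hm]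
    have := (d i ⟨m, hm⟩).isLt
    omega
  have hxlen : ∀ d, (encode2 q a ℓ M hq0 u (dataFun q a ℓ M d)).length = M * ℓ := fun d =>
    encode2_length q a ℓ M hq0 (by omega) u hulen _
  have hinj : Function.Injective
      (fun d : Fin M → Fin (ℓ - a) → Fin (q - 1) =>
        profileVec q (M * ℓ) ℓ (wordOf (encode2 q a ℓ M hq0 u (dataFun q a ℓ M d)) (hxlen d))) := by
    intro d d' hψ
    simp only at hψ
    set xs := encode2 q a ℓ M hq0 u (dataFun q a ℓ M d) with hxs
    set xs' := encode2 q a ℓ M hq0 u (dataFun q a ℓ M d') with hxs'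
    have haddr : AddressableL q a ℓ M u xs :=
      encode2_addressable q a ℓ M hq0 hq (by omega) hℓ u hulen husum _ (hcf d)
    have haddr' : AddressableL q a ℓ M u xs' :=
      encode2_addressable q a ℓ M hq0 hq (by omega) hℓ u hulen husum _ (hcf d')
    have hblockeq : ∀ i : Fin M,
        (xs.drop (i.val * ℓ)).take ℓ = (xs'.drop (i.val * ℓ)).take ℓ := by
      intro i
      have hiℓ : i.val * ℓ + ℓ ≤ M * ℓ := by
        have h1 : (i.val + 1) * ℓ ≤ M * ℓ := Nat.mul_le_mul_right ℓ i.isLt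
        have h2 : (i.val + 1) * ℓ = i.val * ℓ + ℓ := by ring
        omega
      set w := (xs.drop (i.val * ℓ)).take ℓ with hw
      have hwlen : w.length = ℓ := by
        rw [hw, List.length_take, List.length_drop, hxlen d]; omega
      have hwpre : w.take a = u i := by
        rw [hw, List.take_take, min_eq_left (by omega)]; exact haddr.2.1 i
      have hwint : ∀ j, 1 ≤ j → j + a ≤ ℓ → ∀ m : Fin M, (w.drop j).take a ≠ u m := by
        intro j h1 h2 m
        rw [hw, List.drop_take, List.take_take, min_eq_left (by omega), List.drop_drop]
        exact haddr.2.2 i j h1 h2 m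
      have hpos : 0 < profileVec q (M * ℓ) ℓ (wordOf xs (hxlen d)) (wordOf w hwlen) :=
        (mem_profile q (M * ℓ) ℓ xs w (hxlen d) hwlen).mpr ⟨i.val * ℓ, hiℓ, hw.symm⟩
      rw [show profileVec q (M * ℓ) ℓ (wordOf xs (hxlen d)) =
        profileVec q (M * ℓ) ℓ (wordOf xs' (hxlen d')) from hψ] at hpos
      obtain ⟨p, hpℓ, hgram⟩ := (mem_profile q (M * ℓ) ℓ xs' w (hxlen d') hwlen).mp hpos
      have hp := recover q a ℓ M ha hℓ u huinj xs' haddr' i w hwpre hwint p hpℓ hgram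
      rw [hp] at hgram
      exact hw.trans hgram.symm
    have hxseq : xs = xs' := by
      apply List.ext_getElem (by rw [hxlen d, hxlen d'])
      intro p h1 h2
      have hpM : p < M * ℓ := by rw [hxlen d] at h1; exact h1
      have hℓ0 : 0 < ℓ := by omega
      have hiM : p / ℓ < M := by rw [Nat.div_lt_iff_lt_mul hℓ0]; omega
      have hdm : ℓ * (p / ℓ) + p % ℓ = p := Nat.div_add_mod p ℓ
      have hcomm : (p / ℓ) * ℓ = ℓ * (p / ℓ) := mul_comm _ _
      have hrl : p % ℓ < ℓ := Nat.mod_lt _ hℓ0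
      have hiℓ : (p / ℓ) * ℓ + ℓ ≤ M * ℓ := by
        have ha1 : (p / ℓ + 1) * ℓ ≤ M * ℓ := Nat.mul_le_mul_right ℓ hiM
        have ha2 : (p / ℓ + 1) * ℓ = (p / ℓ) * ℓ + ℓ := by ring
        omega
      have hb := hblockeq ⟨p / ℓ, hiM⟩
      have hlen1 : p % ℓ < ((xs.drop ((p / ℓ) * ℓ)).take ℓ).length := by
        rw [List.length_take, List.length_drop, hxlen d]; omega
      have e1 := List.getElem_of_eq hb hlen1
      rw [List.getElem_take, List.getElem_drop] at e1
      rw [List.getElem_take, List.getElem_drop] at e1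
      have hidx : (p / ℓ) * ℓ + p % ℓ = p := by omega
      simp only [hidx] at e1
      exact e1
    have hcc := encode2_inj q a ℓ M hq0 hq (by omega) u hulen _ _ (hcf d) (hcf d') hxseq
    funext i k
    have hk := hcc i k.val k.isLt
    simp only [dataFun, dif_pos k.isLt, Fin.eta] at hk
    exact Fin.ext (by omega)
  calc (q - 1) ^ (M * (ℓ - a))
      = Fintype.card (Fin M → Fin (ℓ - a) → Fin (q - 1)) := by
        rw [Fintype.card_fun]
        simp [Fintype.card_fun, ← pow_mul, mul_comm]
    _ = (Finset.univ.image
          (fun d : Fin M → Fin (ℓ - a) → Fin (q - 1) =>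
            profileVec q (M * ℓ) ℓ
              (wordOf (encode2 q a ℓ M hq0 u (dataFun q a ℓ M d)) (hxlen d)))).card := by
        rw [Finset.card_image_of_injective _ hinj, Finset.card_univ]
    _ ≤ numProfiles q (M * ℓ) ℓ := by
        apply Finset.card_le_card
        intro y hy
        rw [Finset.mem_image] at hy
        obtain ⟨d, _, rfl⟩ := hy
        exact Finset.mem_image_of_mem _ (Finset.mem_univ _)

/-- With `A*` enumerated by `u`, `M = q^{a−1}` and `2a ≤ ℓ`: `encode₂` is injective
on valid data, every output is `(A*,ℓ)`-addressable, and consequently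
`P_q(q^{a−1}ℓ, ℓ) ≥ (q−1)^{q^{a−1}(ℓ−a)}`. -/
theorem stmt_10 (q a ℓ : ℕ) (hq : 2 ≤ q) (ha : 2 ≤ a) (hℓ : 2 * a ≤ ℓ)
    (u : Fin (q ^ (a - 1)) → List (Fin q))
    (hulen : ∀ i, (u i).length = a)
    (husum : ∀ i, (((u i).map Fin.val).sum) % q = 0)
    (huinj : Function.Injective u) :
    (∀ c c' : Fin (q ^ (a - 1)) → ℕ → ℕ,
      (∀ i m, m < ℓ - a → 1 ≤ c i m ∧ c i m ≤ q - 1) →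
      (∀ i m, m < ℓ - a → 1 ≤ c' i m ∧ c' i m ≤ q - 1) →
      encode2 q a ℓ (q ^ (a - 1)) (by omega) u c =
        encode2 q a ℓ (q ^ (a - 1)) (by omega) u c' →
      ∀ i m, m < ℓ - a → c i m = c' i m) ∧
    (∀ c : Fin (q ^ (a - 1)) → ℕ → ℕ,
      (∀ i m, m < ℓ - a → 1 ≤ c i m ∧ c i m ≤ q - 1) →
      AddressableL q a ℓ (q ^ (a - 1)) u
        (encode2 q a ℓ (q ^ (a - 1)) (by omega) u c)) ∧
    (q - 1) ^ (q ^ (a - 1) * (ℓ - a)) ≤ numProfiles q (q ^ (a - 1) * ℓ) ℓ := by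
  refine ⟨?_, ?_, ?_⟩
  · intro c c' hc hc' heq
    exact encode2_inj q a ℓ (q ^ (a - 1)) (by omega) hq (by omega) u hulen c c' hc hc' heq
  · intro c hcv
    exact encode2_addressable q a ℓ (q ^ (a - 1)) (by omega) hq (by omega) hℓ u hulen husum c hcv
  · exact encode2_count q a ℓ hq ha hℓ (q ^ (a - 1)) (pow_pos (by omega) _) u hulen husum huinj
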